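/- The set of pairs of rational numbers (u, v) with 0 < u < 1 and 0 < v < 1 satisfying 2u²v² − 2uv² + 2u² + uv − 2u + v = 0 is infinite. -/

import Mathlib

/-! Infinitely many rational solutions to the quartic
`2u²v² - 2uv² + 2u² + uv - 2u + v = 0` in the open unit box.

Strategy: the quartic corresponds to the elliptic curve `w² = x³ - 15x² + 128x`.
Starting from a rational point whose `x`-coordinate has 2-adic valuation `-6`,
repeated doubling produces points with strictly decreasing 2-adic valuation of `x`.
Each such point is converted to a solution `(u, v)` of the quartic in the unit box,
with `padicValRat 2 u` determined by `n`, hence all solutions are distinct. -/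

private def stepx (x w : ℚ) : ℚ := ((3*x^2 - 30*x + 128)/(2*w))^2 + 15 - 2*x

private def stepw (x w : ℚ) : ℚ :=
  ((3*x^2 - 30*x + 128)/(2*w)) * (x - stepx x w) - w

private def pt : ℕ → ℚ × ℚ
  | 0 => (922154689/73410624, -21997476821951/628982226432)
  | n+1 => (stepx (pt n).1 (pt n).2, stepw (pt n).1 (pt n).2)

private def uOf (x w : ℚ) : ℚ :=
  2*(x-16)/((if x < 16 then -|w| else |w|) - x - 32)

private def yOf (x w : ℚ) : ℚ := (x*(uOf x w)^2 - 2*(uOf x w) - 2)/2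

private def vOf (x w : ℚ) : ℚ :=
  (uOf x w + 1 - |yOf x w|)/(4*(uOf x w)*(1-(uOf x w)))

/-- valuation of a sum when the first term has strictly smaller valuation -/
private lemma v2_add {q r : ℚ} (hq : q ≠ 0)
    (h : padicValRat 2 q < padicValRat 2 r) :
    padicValRat 2 (q + r) = padicValRat 2 q := by
  rcases eq_or_ne r 0 with rfl | hr
  · simp
  · refine padicValRat.add_eq_of_lt ?_ hq hr h
    intro h0
    have hrq : r = -q := by linarith
    rw [hrq, padicValRat.neg] at h
    exact lt_irrefl _ h

private lemma v2_16 : padicValRat 2 (16:ℚ) = 4 := by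
  rw [show (16:ℚ) = (2:ℚ)^4 by norm_num, padicValRat.pow (2:ℚ),
    show ((2:ℚ) = ((2:ℕ):ℚ)) by norm_num, padicValRat.self one_lt_two]
  norm_num

private lemma v2_32 : padicValRat 2 (32:ℚ) = 5 := by
  rw [show (32:ℚ) = (2:ℚ)^5 by norm_num, padicValRat.pow (2:ℚ),
    show ((2:ℚ) = ((2:ℕ):ℚ)) by norm_num, padicValRat.self one_lt_two]
  norm_num

private lemma v2_128 : padicValRat 2 (128:ℚ) = 7 := by
  rw [show (128:ℚ) = (2:ℚ)^7 by norm_num, padicValRat.pow (2:ℚ),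
    show ((2:ℚ) = ((2:ℕ):ℚ)) by norm_num, padicValRat.self one_lt_two]
  norm_num

private lemma v2_2 : padicValRat 2 (2:ℚ) = 1 := by
  rw [show ((2:ℚ) = ((2:ℕ):ℚ)) by norm_num, padicValRat.self one_lt_two]

/-- positivity of x on the curve -/
private lemma x_pos {x w : ℚ} (hw0 : w ≠ 0) (hx0 : x ≠ 0)
    (hc : w^2 = x^3 - 15*x^2 + 128*x) : 0 < x := by
  rcases lt_or_gt_of_ne hx0 with h | h
  · nlinarith [sq_nonneg w, sq_nonneg x]
  · exact h

/-- valuation of w on the curve -/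
private lemma vw_curve {x w : ℚ} (n : ℕ) (hx0 : x ≠ 0) (hw0 : w ≠ 0)
    (hc : w^2 = x^3 - 15*x^2 + 128*x)
    (hvx : padicValRat 2 x = -2*(n:ℤ) - 6) :
    padicValRat 2 w = -3*(n:ℤ) - 9 := by
  have hx2 : x^2 ≠ 0 := pow_ne_zero _ hx0
  have hx3 : x^3 ≠ 0 := pow_ne_zero _ hx0
  have hv2 : padicValRat 2 (x^2) = 2*(-2*(n:ℤ) - 6) := by
    rw [padicValRat.pow x]; rw [hvx]; push_cast; ring
  have hv3 : padicValRat 2 (x^3) = 3*(-2*(n:ℤ) - 6) := by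
    rw [padicValRat.pow x]; rw [hvx]; push_cast; ring
  have h15 : padicValRat 2 ((-15)*x^2) = 2*(-2*(n:ℤ) - 6) := by
    rw [padicValRat.mul (by norm_num) hx2,
      show ((-15:ℚ)) = -(15:ℚ) by norm_num, padicValRat.neg]
    rw [show ((15:ℚ) = ((15:ℕ):ℚ)) by norm_num, padicValRat.of_nat]
    rw [hv2]
    norm_num [padicValNat.eq_zero_of_not_dvd (by norm_num : ¬ 2 ∣ 15)]
  have h128 : padicValRat 2 (128*x) = 7 + (-2*(n:ℤ) - 6) := by
    rw [padicValRat.mul (by norm_num) hx0, v2_128, hvx]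
  have hsum : padicValRat 2 ((-15)*x^2 + 128*x) = 2*(-2*(n:ℤ) - 6) := by
    rw [v2_add (by simpa using hx2) (by rw [h15, h128]; omega)]
    exact h15
  have hD : padicValRat 2 (x^3 - 15*x^2 + 128*x) = -6*(n:ℤ) - 18 := by
    rw [show x^3 - 15*x^2 + 128*x = x^3 + ((-15)*x^2 + 128*x) by ring]
    rw [v2_add hx3]
    · rw [hv3]; ring
    · rw [hv3, hsum]; omega
  have hw2 : padicValRat 2 (w^2) = 2 * padicValRat 2 w := by
    rw [padicValRat.pow w]; push_cast; ring
  rw [hc, hD] at hw2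
  omega

/-- doubling step: curve equation preserved and x-formula -/
private lemma step_spec {x w : ℚ} (hw0 : w ≠ 0)
    (hc : w^2 = x^3 - 15*x^2 + 128*x) :
    (stepw x w)^2 = (stepx x w)^3 - 15*(stepx x w)^2 + 128*(stepx x w) ∧
      stepx x w = (x^2-128)^2/(4*w^2) := by
  have h4 : (4:ℚ)*w^2 ≠ 0 := by positivity
  have hx' : stepx x w = (x^2-128)^2/(4*w^2) := by
    have h1 : stepx x w = ((3*x^2-30*x+128)^2 + (15-2*x)*(4*w^2))/(4*w^2) := by
      unfold stepx; field_simp; ring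
    rw [h1, show (3*x^2-30*x+128)^2 + (15-2*x)*(4*w^2) = (x^2-128)^2 from by
      linear_combination (60-8*x)*hc]
  refine ⟨?_, hx'⟩
  have h8 : (8:ℚ)*w^3 ≠ 0 := by
    simp only [mul_ne_zero_iff]; exact ⟨by norm_num, pow_ne_zero _ hw0⟩
  have hw' : stepw x w =
      ((3*x^2-30*x+128)*(4*w^2*x - (x^2-128)^2) - 8*w^4)/(8*w^3) := by
    unfold stepw; rw [hx']; field_simp; ring
  rw [hw', hx', div_pow]
  have hrhs : ((x^2-128)^2/(4*w^2))^3 - 15*((x^2-128)^2/(4*w^2))^2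
      + 128*((x^2-128)^2/(4*w^2))
      = ((x^2-128)^6 - 60*(x^2-128)^4*w^2 + 2048*(x^2-128)^2*w^4)/((8*w^3)^2) := by
    field_simp; ring
  rw [hrhs]
  congr 1
  linear_combination (16106127360 + 64*w^6 - 2147483648*x - 7864320*x*w^2
    - 503316480*x^2 + 1048576*x^2*w^2 + 960*x^2*w^4 + 67108864*x^3
    + 122880*x^3*w^2 - 128*x^3*w^4 + 5898240*x^4 - 16384*x^4*w^2
    - 786432*x^5 - 480*x^5*w^2 - 30720*x^6 + 64*x^6*w^2 + 4096*x^7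
    + 60*x^8 - 8*x^9) * hc

/-- main induction: curve equation and valuation of x -/
private lemma pt_spec : ∀ n : ℕ,
    (pt n).2^2 = (pt n).1^3 - 15*(pt n).1^2 + 128*(pt n).1 ∧
      padicValRat 2 (pt n).1 = -2*(n:ℤ) - 6 := by
  intro n
  induction n with
  | zero =>
      constructor
      · show ((-21997476821951:ℚ)/628982226432)^2 = _
        norm_num [pt]
      · show padicValRat 2 ((922154689:ℚ)/73410624) = _
        rw [show ((922154689:ℚ)/73410624)
            = ((922154689:ℕ):ℚ)/(((2:ℚ)^6) * ((1147041:ℕ):ℚ)) by norm_num]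
        rw [padicValRat.div (by norm_num) (by norm_num),
          padicValRat.mul (by norm_num) (by norm_num),
          padicValRat.pow (2:ℚ), padicValRat.of_nat, padicValRat.of_nat,
          show ((2:ℚ) = ((2:ℕ):ℚ)) by norm_num, padicValRat.self one_lt_two]
        norm_num [padicValNat.eq_zero_of_not_dvd (by norm_num : ¬ 2 ∣ 922154689),
          padicValNat.eq_zero_of_not_dvd (by norm_num : ¬ 2 ∣ 1147041)]
  | succ n ih =>
      obtain ⟨hc, hvx⟩ := ih
      set x := (pt n).1 with hxdef
      set w := (pt n).2 with hwdef
      have hx0 : x ≠ 0 := by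
        intro h; rw [h, padicValRat.zero] at hvx; omega
      have hw0 : w ≠ 0 := by
        intro h
        rw [h] at hc
        have hxpos : (0:ℚ) < x^3 - 15*x^2 + 128*x → False := by
          intro hpos; nlinarith [hc]
        have : x * (x^2 - 15*x + 128) = 0 := by linarith [hc.symm]
        have h2 : x^2 - 15*x + 128 > 0 := by nlinarith [sq_nonneg (x - 8)]
        have : x = 0 := by
          rcases mul_eq_zero.1 this with h | h
          · exact h
          · linarith
        exact hx0 this
      obtain ⟨hc', hx'⟩ := step_spec hw0 hc
      have hvw : padicValRat 2 w = -3*(n:ℤ) - 9 := vw_curve n hx0 hw0 hc hvx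
      refine ⟨hc', ?_⟩
      have hx2 : x^2 ≠ 0 := pow_ne_zero _ hx0
      have hv2 : padicValRat 2 (x^2) = -4*(n:ℤ) - 12 := by
        rw [padicValRat.pow x, hvx]; push_cast; ring
      have hnum : padicValRat 2 ((x^2-128)^2) = -8*(n:ℤ) - 24 := by
        have h1 : padicValRat 2 (x^2 - 128) = -4*(n:ℤ) - 12 := by
          rw [show x^2 - 128 = x^2 + (-128) from by ring, v2_add hx2]
          · exact hv2
          · rw [hv2, show ((-128:ℚ)) = -(128:ℚ) by norm_num, padicValRat.neg, v2_128]
            omega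
        have hne : x^2 - 128 ≠ 0 := by
          intro h; rw [h, padicValRat.zero] at h1; omega
        rw [padicValRat.pow (x^2 - 128), h1]; push_cast; ring
      have hden : padicValRat 2 (4*w^2) = -6*(n:ℤ) - 16 := by
        rw [padicValRat.mul (by norm_num) (pow_ne_zero _ hw0),
          padicValRat.pow w, hvw,
          show ((4:ℚ) = (2:ℚ)^2) by norm_num, padicValRat.pow (2:ℚ),
          show ((2:ℚ) = ((2:ℕ):ℚ)) by norm_num, padicValRat.self one_lt_two]
        push_cast; ring
      have hnum0 : ((x^2-128)^2 : ℚ) ≠ 0 := by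
        intro h; rw [h, padicValRat.zero] at hnum; omega
      show padicValRat 2 (stepx x w) = _
      rw [hx', padicValRat.div hnum0 (by positivity), hnum, hden]
      push_cast; ring

/-- the box lemma: from a curve point, construct a solution in the unit box -/
private lemma box {x w : ℚ} (hc : w^2 = x^3 - 15*x^2 + 128*x) (hw0 : w ≠ 0)
    (hxpos : 0 < x) (hx16 : x ≠ 16) :
    0 < uOf x w ∧ uOf x w < 1 ∧ 0 < vOf x w ∧ vOf x w < 1 ∧
      2*(uOf x w)^2*(vOf x w)^2 - 2*(uOf x w)*(vOf x w)^2 + 2*(uOf x w)^2 +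
        (uOf x w)*(vOf x w) - 2*(uOf x w) + (vOf x w) = 0 := by
  obtain ⟨W, hWdef⟩ : ∃ W : ℚ, W = (if x < 16 then -|w| else |w|) := ⟨_, rfl⟩
  have hspos : 0 < |w| := abs_pos.2 hw0
  have hW2 : W^2 = x^3 - 15*x^2 + 128*x := by
    rw [hWdef]
    split_ifs
    · rw [neg_sq, sq_abs]; exact hc
    · rw [sq_abs]; exact hc
  have hu : uOf x w = 2*(x-16)/(W - x - 32) := by rw [hWdef]; rfl
  -- denominator and u bounds
  have hubound : 0 < uOf x w ∧ uOf x w < 1 ∧ (W - x - 32 ≠ 0) := by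
    rcases lt_or_gt_of_ne hx16 with h | h
    · -- x < 16, W = -|w|
      have hW : W = -|w| := by rw [hWdef, if_pos h]
      have hdpos : 0 < |w| + x + 32 := by linarith
      have hueq : uOf x w = 2*(16-x)/(|w| + x + 32) := by
        rw [hu, hW, div_eq_div_iff (by linarith) (by linarith)]
        ring
      refine ⟨?_, ?_, ?_⟩
      · rw [hueq]; exact div_pos (by linarith) hdpos
      · rw [hueq, div_lt_one hdpos]; linarith
      · rw [hW]; intro h0; linarith
    · -- 16 < x, W = |w|
      have hW : W = |w| := by rw [hWdef, if_neg (by linarith)]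
      have h1 : (x + 32)^2 < |w|^2 := by
        rw [sq_abs, hc]; nlinarith
      have hWgt : x + 32 < |w| := by nlinarith [abs_nonneg w]
      have hcube : 0 < x*((x-8)*(x-16)) :=
        mul_pos hxpos (mul_pos (by linarith) (by linarith))
      have h2 : (3*x)^2 < |w|^2 := by
        rw [sq_abs, hc]; nlinarith [hcube]
      have hW3 : 3*x < |w| := by nlinarith [abs_nonneg w]
      refine ⟨?_, ?_, ?_⟩
      · rw [hu, hW]; exact div_pos (by linarith) (by linarith)
      · rw [hu, hW, div_lt_one (by linarith)]; linarith
      · rw [hW]; intro h0; linarith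
  obtain ⟨hu0, hu1, hd0⟩ := hubound
  -- quartic relation for y
  have hy2 : (yOf x w)^2 = -16*(uOf x w)^4 + 32*(uOf x w)^3 - 15*(uOf x w)^2
      + 2*(uOf x w) + 1 := by
    have hydef : yOf x w = (x*(uOf x w)^2 - 2*(uOf x w) - 2)/2 := rfl
    have h1 : yOf x w = (2*x*(x-16)^2 - 2*(x-16)*(W-x-32) - (W-x-32)^2)/(W-x-32)^2 := by
      rw [hydef, hu]; field_simp
    have h2 : -16*(uOf x w)^4 + 32*(uOf x w)^3 - 15*(uOf x w)^2 + 2*(uOf x w) + 1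
        = (-256*(x-16)^4 + 256*(x-16)^3*(W-x-32) - 60*(x-16)^2*(W-x-32)^2
           + 4*(x-16)*(W-x-32)^3 + (W-x-32)^4)/((W-x-32)^2)^2 := by
      rw [hu]; field_simp; ring
    rw [h1, h2, div_pow]
    congr 1
    linear_combination (16384 - 3072*x + 192*x^2 - 4*x^3) * hW2
  -- v bounds and the final equation
  obtain ⟨u, hudef⟩ : ∃ u : ℚ, u = uOf x w := ⟨_, rfl⟩
  obtain ⟨ya, hyadef⟩ : ∃ y : ℚ, y = |yOf x w| := ⟨_, rfl⟩
  rw [← hudef] at hu0 hu1 hy2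
  have hya2 : ya^2 = -16*u^4 + 32*u^3 - 15*u^2 + 2*u + 1 := by
    rw [hyadef, sq_abs]; exact hy2
  have hya0 : 0 ≤ ya := hyadef ▸ abs_nonneg _
  have hvdef : vOf x w = (u + 1 - ya)/(4*u*(1-u)) := by
    rw [hudef, hyadef]; rfl
  have hDpos : 0 < 4*u*(1-u) := by nlinarith
  have hlt : ya < u + 1 := by
    refine lt_of_pow_lt_pow_left₀ 2 (by linarith) ?_
    rw [hya2]; nlinarith [sq_nonneg (u*(1-u))]
  have hcpos : 0 < 4*u^2 - 3*u + 1 := by nlinarith [sq_nonneg (8*u - 3)]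
  have hsq : (4*u^2 - 3*u + 1)^2 < ya^2 := by
    rw [hya2]
    nlinarith [mul_pos (mul_pos hu0 (by linarith : (0:ℚ) < 1 - u)) hcpos]
  have hgt : 4*u^2 - 3*u + 1 < ya := lt_of_pow_lt_pow_left₀ 2 hya0 hsq
  rw [← hudef]
  refine ⟨hu0, hu1, ?_, ?_, ?_⟩
  · rw [hvdef]; exact div_pos (by linarith) hDpos
  · rw [hvdef, div_lt_one hDpos]; linarith
  · have hv4 : vOf x w * (4*u*(1-u)) = u + 1 - ya := by
      rw [hvdef]; exact div_mul_cancel₀ _ (ne_of_gt hDpos)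
    have hE : (2*u^2*(vOf x w)^2 - 2*u*(vOf x w)^2 + 2*u^2 + u*(vOf x w) - 2*u
        + vOf x w) * (8*u*(1-u))
        = (-16*u^4 + 32*u^3 - 15*u^2 + 2*u + 1) - ya^2 := by
      linear_combination (-(vOf x w)*(4*u*(1-u)) + u + 1 + ya) * hv4
    have h0 : (2*u^2*(vOf x w)^2 - 2*u*(vOf x w)^2 + 2*u^2 + u*(vOf x w) - 2*u
        + vOf x w) * (8*u*(1-u)) = 0 := by
      rw [hE, hya2]; ring
    rcases mul_eq_zero.1 h0 with h | h
    · exact h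
    · have h2 : 0 < 8*u*(1-u) :=
        mul_pos (by linarith : (0:ℚ) < 8*u) (by linarith : (0:ℚ) < 1-u)
      exact absurd h (ne_of_gt h2)
/-- 2-adic valuation of the constructed u -/
private lemma val_u {x w : ℚ} (n : ℕ) (hx0 : x ≠ 0) (hw0 : w ≠ 0)
    (hvx : padicValRat 2 x = -2*(n:ℤ) - 6)
    (hvw : padicValRat 2 w = -3*(n:ℤ) - 9) :
    padicValRat 2 (uOf x w) = (n:ℤ) + 4 := by
  set W : ℚ := (if x < 16 then -|w| else |w|) with hWdef
  have habs : padicValRat 2 |w| = padicValRat 2 w := by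
    rcases abs_cases w with ⟨h1, _⟩ | ⟨h1, _⟩
    · rw [h1]
    · rw [h1, padicValRat.neg]
  have hvW : padicValRat 2 W = -3*(n:ℤ) - 9 := by
    rw [hWdef]; split_ifs
    · rw [padicValRat.neg, habs, hvw]
    · rw [habs, hvw]
  have hW0 : W ≠ 0 := by
    intro h; rw [h, padicValRat.zero] at hvW; omega
  have hx16v : padicValRat 2 (x - 16) = -2*(n:ℤ) - 6 := by
    rw [show x - 16 = x + (-16) by ring,
      v2_add hx0 (by
        rw [hvx, show ((-16:ℚ)) = -(16:ℚ) by norm_num, padicValRat.neg, v2_16]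
        omega)]
    exact hvx
  have hx16ne : x - 16 ≠ 0 := by
    intro h; rw [h, padicValRat.zero] at hx16v; omega
  have hnum : padicValRat 2 (2*(x-16)) = -2*(n:ℤ) - 5 := by
    rw [padicValRat.mul two_ne_zero hx16ne, v2_2, hx16v]; ring
  have hin : padicValRat 2 (-x + -32) = -2*(n:ℤ) - 6 := by
    rw [v2_add (neg_ne_zero.2 hx0) (by
      rw [padicValRat.neg, hvx, show ((-32:ℚ)) = -(32:ℚ) by norm_num,
        padicValRat.neg, v2_32]
      omega)]
    rw [padicValRat.neg, hvx]
  have hden : padicValRat 2 (W - x - 32) = -3*(n:ℤ) - 9 := by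
    rw [show W - x - 32 = W + (-x + -32) by ring,
      v2_add hW0 (by rw [hvW, hin]; omega)]
    exact hvW
  have hdenne : W - x - 32 ≠ 0 := by
    intro h; rw [h, padicValRat.zero] at hden; omega
  have hnumne : 2*(x-16) ≠ 0 := mul_ne_zero two_ne_zero hx16ne
  show padicValRat 2 (2*(x-16)/(W - x - 32)) = _
  rw [padicValRat.div hnumne hdenne, hnum, hden]; ring

/-- collected properties of the n-th point -/
private lemma pt_props (n : ℕ) :
    0 < uOf (pt n).1 (pt n).2 ∧ uOf (pt n).1 (pt n).2 < 1 ∧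
    0 < vOf (pt n).1 (pt n).2 ∧ vOf (pt n).1 (pt n).2 < 1 ∧
    2*(uOf (pt n).1 (pt n).2)^2*(vOf (pt n).1 (pt n).2)^2
      - 2*(uOf (pt n).1 (pt n).2)*(vOf (pt n).1 (pt n).2)^2
      + 2*(uOf (pt n).1 (pt n).2)^2
      + (uOf (pt n).1 (pt n).2)*(vOf (pt n).1 (pt n).2)
      - 2*(uOf (pt n).1 (pt n).2) + (vOf (pt n).1 (pt n).2) = 0 ∧
    padicValRat 2 (uOf (pt n).1 (pt n).2) = (n:ℤ) + 4 := by
  obtain ⟨hc, hvx⟩ := pt_spec n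
  set x := (pt n).1
  set w := (pt n).2
  have hx0 : x ≠ 0 := by
    intro h; rw [h, padicValRat.zero] at hvx; omega
  have hw0 : w ≠ 0 := by
    intro h
    rw [h] at hc
    have h2 : x^2 - 15*x + 128 > 0 := by nlinarith [sq_nonneg (x - 8)]
    have h3 : x * (x^2 - 15*x + 128) = 0 := by nlinarith [hc]
    rcases mul_eq_zero.1 h3 with h4 | h4
    · exact hx0 h4
    · linarith
  have hx16 : x ≠ 16 := by
    intro h
    rw [h, v2_16] at hvx; omega
  have hxpos : 0 < x := x_pos hw0 hx0 hc
  have hvw : padicValRat 2 w = -3*(n:ℤ) - 9 := vw_curve n hx0 hw0 hc hvx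
  obtain ⟨h1, h2, h3, h4, h5⟩ := box hc hw0 hxpos hx16
  exact ⟨h1, h2, h3, h4, h5, val_u n hx0 hw0 hvx hvw⟩

theorem infinitely_many_quartic_solutions :
    {uv : ℚ × ℚ | 0 < uv.1 ∧ uv.1 < 1 ∧ 0 < uv.2 ∧ uv.2 < 1 ∧
      2 * uv.1 ^ 2 * uv.2 ^ 2 - 2 * uv.1 * uv.2 ^ 2 + 2 * uv.1 ^ 2 +
        uv.1 * uv.2 - 2 * uv.1 + uv.2 = 0}.Infinite := by
  apply Set.infinite_of_injective_forall_mem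
    (f := fun n : ℕ => (uOf (pt n).1 (pt n).2, vOf (pt n).1 (pt n).2))
  case hi =>
    intro a b hab
    have h1 : uOf (pt a).1 (pt a).2 = uOf (pt b).1 (pt b).2 :=
      congrArg Prod.fst hab
    have h2 := (pt_props a).2.2.2.2.2
    have h3 := (pt_props b).2.2.2.2.2
    rw [h1, h3] at h2
    have h4 : (b:ℤ) + 4 = (a:ℤ) + 4 := h2
    omega
  case hf =>
    intro n
    obtain ⟨h1, h2, h3, h4, h5, _⟩ := pt_props n
    refine ⟨h1, h2, h3, h4, ?_⟩
    linear_combination h5
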